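/- Every OHC edge e satisfies f(e) ≥ i − 1: for each of the i−1 edges {u,v} of the OHC other than e, the Hamiltonian path obtained from the OHC by deleting {u,v} is the optimal path OP(u,v), and it contains e. -/

import Mathlib

open Finset

/-- The length of a path, given as a list of vertices, with respect to the
distance function `d`: the sum of `d` over consecutive entries. -/
def pathLen {V : Type*} (d : V → V → ℝ) (P : List V) : ℝ :=
  ((P.zip P.tail).map fun p => d p.1 p.2).sum

/-- A path (list of vertices) contains the edge `{x, y}` iff `x` and `y`
occur consecutively in it (in either order). -/
def ContainsEdge {V : Type*} (P : List V) (x y : V) : Prop :=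
  [x, y] <:+: P ∨ [y, x] <:+: P

/-- A Hamiltonian path of the whole (finite) vertex type `V` from `u` to `v`:
a duplicate-free list of all vertices starting at `u` and ending at `v`. -/
def IsHamPath {V : Type*} (P : List V) (u v : V) : Prop :=
  P.Nodup ∧ (∀ x : V, x ∈ P) ∧ P.head? = some u ∧ P.getLast? = some v

/-- The frequency of the (unordered) edge `e`: the number of unordered pairs
`{u, v}` of distinct vertices whose optimal path `OP u v` contains `e`. -/
noncomputable def freq {V : Type*} (OP : V → V → List V) (e : Sym2 V) : ℕ :=
  Nat.card {p : Sym2 V // ¬ p.IsDiag ∧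
    ∃ u v : V, p = s(u, v) ∧ ∃ x y : V, e = s(x, y) ∧ ContainsEdge (OP u v) x y}

/-- The length of the cycle obtained by closing up the list `C`. -/
def cycLen {V : Type*} (d : V → V → ℝ) (C : List V) : ℝ :=
  pathLen d (C ++ C.take 1)

/-- A Hamiltonian cycle of the finite vertex type `V`, represented as a
duplicate-free list of all vertices (closed up cyclically). -/
def IsHamCycle {V : Type*} (C : List V) : Prop :=
  C.Nodup ∧ ∀ x : V, x ∈ C

/-- `x` and `y` are cyclically consecutive on the cycle (list) `C`. -/
def CycAdj {V : Type*} (C : List V) (x y : V) : Prop :=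
  ContainsEdge (C ++ C.take 1) x y

namespace Stmt7Aux

/-- the list of consecutive pairs -/
def pairs {V : Type*} (L : List V) : List (V × V) := L.zip L.tail

variable {V : Type*} (d : V → V → ℝ)

lemma pairs_nil : pairs ([] : List V) = [] := rfl
lemma pairs_single (a : V) : pairs [a] = [] := rfl

lemma pairs_cons_cons (a b : V) (l : List V) :
    pairs (a :: b :: l) = (a, b) :: pairs (b :: l) := rfl

lemma pathLen_nil : pathLen d ([] : List V) = 0 := by simp [pathLen]
lemma pathLen_single (a : V) : pathLen d [a] = 0 := by simp [pathLen]

lemma pathLen_cons_cons (a b : V) (l : List V) :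
    pathLen d (a :: b :: l) = d a b + pathLen d (b :: l) := by
  simp [pathLen, List.zip]

lemma pathLen_concat : ∀ (l : List V) (h : l ≠ []) (x : V),
    pathLen d (l ++ [x]) = pathLen d l + d (l.getLast h) x
  | [], h, x => absurd rfl h
  | [a], _, x => by simp [pathLen_cons_cons, pathLen_single]
  | (a :: b :: t), _, x => by
    have h2 := pathLen_concat (b :: t) (List.cons_ne_nil _ _) x
    rw [List.cons_append] at h2
    show pathLen d (a :: b :: (t ++ [x])) = _
    rw [pathLen_cons_cons, h2, List.getLast_cons (List.cons_ne_nil b t), pathLen_cons_cons]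
    ring

lemma pairs_concat : ∀ (l : List V) (h : l ≠ []) (x : V),
    pairs (l ++ [x]) = pairs l ++ [(l.getLast h, x)]
  | [], h, x => absurd rfl h
  | [a], _, x => rfl
  | (a :: b :: t), _, x => by
    have h2 := pairs_concat (b :: t) (List.cons_ne_nil _ _) x
    rw [List.cons_append] at h2
    show pairs (a :: b :: (t ++ [x])) = _
    rw [pairs_cons_cons, h2, List.getLast_cons (List.cons_ne_nil b t), pairs_cons_cons,
      List.cons_append]

lemma mem_pairs {p q : V} : ∀ {l : List V}, (p, q) ∈ pairs l ↔ [p, q] <:+: l := by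
  intro l
  constructor
  · intro h
    induction l with
    | nil => simp [pairs] at h
    | cons a M ih =>
      match M, h with
      | b :: M', h =>
        rw [pairs_cons_cons] at h
        rcases List.mem_cons.1 h with h | h
        · obtain ⟨rfl, rfl⟩ := Prod.mk.injEq .. ▸ h
          exact ⟨[], M', by simp⟩
        · exact (ih h).trans (List.suffix_cons a (b :: M')).isInfix
  · rintro ⟨s, t, rfl⟩
    induction s with
    | nil => simp [pairs_cons_cons]
    | cons a s ih =>
      have hne : s ++ [p, q] ++ t ≠ [] := by simp
      obtain ⟨c, M, hM⟩ := List.exists_cons_of_ne_nil hne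
      rw [List.cons_append, List.cons_append, hM, pairs_cons_cons]
      exact List.mem_cons_of_mem _ (hM ▸ ih)

section Layer2
variable {V : Type*} (d : V → V → ℝ)

lemma take_one_of_ne_nil {l : List V} (h : l ≠ []) : l.take 1 = [l.head h] := by
  cases l with
  | nil => exact absurd rfl h
  | cons a t => simp

/-- the cyclic pairs of a list -/
def cpairs (l : List V) : List (V × V) := pairs (l ++ l.take 1)

lemma cpairs_eq {l : List V} (h : l ≠ []) :
    cpairs l = pairs l ++ [(l.getLast h, l.head h)] := by
  rw [cpairs, take_one_of_ne_nil h, pairs_concat l h]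

lemma cycLen_eq {l : List V} (h : l ≠ []) :
    cycLen d l = pathLen d l + d (l.getLast h) (l.head h) := by
  rw [cycLen, take_one_of_ne_nil h, pathLen_concat d l h]

lemma cycLen_rotate_one (l : List V) : cycLen d (l.rotate 1) = cycLen d l := by
  match l with
  | [] => rfl
  | [a] => rw [List.rotate_singleton]
  | a :: b :: t =>
    rw [show (1:ℕ) = 0 + 1 from rfl, List.rotate_cons_succ, List.rotate_zero]
    have hbt : (b :: t) ≠ [] := List.cons_ne_nil _ _
    have h1 : (b :: t) ++ [a] ≠ [] := by simp
    rw [cycLen_eq d h1, cycLen_eq d (List.cons_ne_nil a (b :: t)),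
      pathLen_concat d (b :: t) hbt a, pathLen_cons_cons]
    have hhead : ((b :: t) ++ [a]).head h1 = b := rfl
    have hlast : ((b :: t) ++ [a]).getLast h1 = a := List.getLast_concat
    have hlast2 : (a :: b :: t).getLast (List.cons_ne_nil a (b::t)) = (b :: t).getLast hbt :=
      List.getLast_cons hbt
    rw [hhead, hlast, hlast2]
    simp
    ring
  
lemma cycLen_rotate (l : List V) (k : ℕ) : cycLen d (l.rotate k) = cycLen d l := by
  induction k generalizing l with
  | zero => rw [List.rotate_zero]
  | succ k ih =>
    rw [show k + 1 = 1 + k by omega, ← List.rotate_rotate, ih, cycLen_rotate_one]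

lemma mem_cpairs_rotate_one {p q : V} {l : List V}
    (h : (p, q) ∈ cpairs l) : (p, q) ∈ cpairs (l.rotate 1) := by
  match l with
  | [] => exact h
  | [a] => rwa [List.rotate_singleton]
  | a :: b :: t =>
    rw [show (1:ℕ) = 0 + 1 from rfl, List.rotate_cons_succ, List.rotate_zero]
    have hbt : (b :: t) ++ [a] ≠ [] := by simp
    have hl : (a :: b :: t) ≠ [] := List.cons_ne_nil _ _
    rw [cpairs_eq hbt]
    rw [cpairs_eq hl] at h
    have hhead : ((b :: t) ++ [a]).head hbt = b := rfl
    have hlast : ((b :: t) ++ [a]).getLast hbt = a := List.getLast_concat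
    have hhead2 : (a :: b :: t).head hl = a := rfl
    have hlast2 : (a :: b :: t).getLast hl = (b :: t).getLast (List.cons_ne_nil b t) :=
      List.getLast_cons _
    rw [hhead, hlast]
    rw [hhead2, hlast2] at h
    have hp : pairs (a :: b :: t) = (a, b) :: pairs (b :: t) := pairs_cons_cons a b t
    rw [hp] at h
    have hp2 : pairs ((b :: t) ++ [a])
        = pairs (b :: t) ++ [((b :: t).getLast (List.cons_ne_nil b t), a)] :=
      pairs_concat _ _ a
    rw [hp2]
    simp only [List.mem_append, List.mem_cons, List.mem_singleton] at h ⊢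
    tauto

lemma mem_cpairs_rotate {p q : V} {l : List V} (k : ℕ)
    (h : (p, q) ∈ cpairs l) : (p, q) ∈ cpairs (l.rotate k) := by
  induction k generalizing l with
  | zero => rwa [List.rotate_zero]
  | succ k ih =>
    rw [show k + 1 = 1 + k by omega, ← List.rotate_rotate]
    exact ih (mem_cpairs_rotate_one h)

end Layer2

section Layer3
variable {V : Type*}

lemma append_eq_of_nodup : ∀ (s : List V) {a : V} {t : List V} (s' t' : List V),
    (s ++ a :: t).Nodup → s ++ a :: t = s' ++ a :: t' → s = s'
  | [], a, t, s', t', hnd, heq => by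
    cases s' with
    | nil => rfl
    | cons c s'' =>
      exfalso
      simp only [List.nil_append, List.cons_append, List.cons.injEq] at heq
      obtain ⟨rfl, heq2⟩ := heq
      have : a ∈ t := heq2 ▸ (by simp)
      exact (List.nodup_cons.1 hnd).1 this
  | (c :: s₂), a, t, s', t', hnd, heq => by
    cases s' with
    | nil =>
      exfalso
      simp only [List.nil_append, List.cons_append, List.cons.injEq] at heq
      obtain ⟨rfl, heq2⟩ := heq
      have : c ∈ s₂ ++ c :: t := by simp
      rw [List.cons_append, List.nodup_cons] at hnd
      exact hnd.1 this
    | cons c' s'' =>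
      simp only [List.cons_append, List.cons.injEq] at heq
      obtain ⟨rfl, heq2⟩ := heq
      have := append_eq_of_nodup s₂ s'' t' (List.nodup_cons.1 hnd).2 heq2
      rw [this]

lemma head_infix_eq {H : List V} (hne : H ≠ []) {p q : V} (hnd : H.Nodup)
    (h : [p, q] <:+: H) (hp : p = H.head hne) : ∃ t, H = p :: q :: t := by
  obtain ⟨s, t, heq⟩ := h
  have h2 : H = s ++ p :: (q :: t) := by rw [← heq]; simp
  have h3 : H = [] ++ p :: H.tail := by
    simp [hp, List.cons_head_tail]
  have : s = [] := append_eq_of_nodup s [] H.tail (h2 ▸ hnd) (h2 ▸ h3)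
  exact ⟨t, by rw [h2, this, List.nil_append]⟩

lemma getLast_ne_of_cons_cons {a b : V} {t : List V} (hnd : (a :: b :: t).Nodup)
    (hlen : 3 ≤ (a :: b :: t).length) :
    (a :: b :: t).getLast (List.cons_ne_nil _ _) ≠ b := by
  intro hcon
  have ht : t ≠ [] := by
    intro h; rw [h] at hlen; simp at hlen
  rw [List.getLast_cons (List.cons_ne_nil b t), List.getLast_cons ht] at hcon
  have : b ∈ t := hcon ▸ List.getLast_mem ht
  exact ((List.nodup_cons.1 (List.nodup_cons.1 hnd).2).1) this

lemma not_both {H : List V} {a b : V} (hnd : H.Nodup) (hlen : 3 ≤ H.length)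
    (hab : a ≠ b) (h1 : (a, b) ∈ cpairs H) (h2 : (b, a) ∈ cpairs H) : False := by
  have hne : H ≠ [] := by intro h; rw [h] at hlen; simp at hlen
  rw [cpairs_eq hne] at h1 h2
  rcases List.mem_append.1 h1 with h1 | h1 <;> rcases List.mem_append.1 h2 with h2 | h2
  · -- both proper infixes
    obtain ⟨s₁, t₁, he₁⟩ := mem_pairs.1 h1
    obtain ⟨s₂, t₂, he₂⟩ := mem_pairs.1 h2
    have ha : s₁ = (s₂ ++ [b]) := by
      refine append_eq_of_nodup s₁ (s₂ ++ [b]) t₂ (a := a) (t := b :: t₁) ?_ ?_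
      · rw [show s₁ ++ a :: b :: t₁ = s₁ ++ [a, b] ++ t₁ by simp, he₁]; exact hnd
      · rw [show s₁ ++ a :: b :: t₁ = s₁ ++ [a, b] ++ t₁ by simp, he₁, ← he₂]; simp
    have hb : s₁ ++ [a] = s₂ := by
      refine append_eq_of_nodup (s₁ ++ [a]) s₂ (a := b) (t := t₁) (t' := a :: t₂) ?_ ?_
      · rw [show (s₁ ++ [a]) ++ b :: t₁ = s₁ ++ [a, b] ++ t₁ by simp, he₁]; exact hnd
      · rw [show (s₁ ++ [a]) ++ b :: t₁ = s₁ ++ [a, b] ++ t₁ by simp, he₁, ← he₂]; simp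
    rw [← hb] at ha
    have := congrArg List.length ha
    simp at this
  · -- h1 infix, h2 endpoint : b = last, a = head
    rw [List.mem_singleton, Prod.mk.injEq] at h2
    obtain ⟨t, hH⟩ := head_infix_eq hne hnd (mem_pairs.1 h1) h2.2
    have hlast : H.getLast hne = b := h2.1.symm
    subst hH
    exact getLast_ne_of_cons_cons hnd hlen hlast
  · -- h1 endpoint : a = last, b = head ; h2 infix
    rw [List.mem_singleton, Prod.mk.injEq] at h1
    obtain ⟨t, hH⟩ := head_infix_eq hne hnd (mem_pairs.1 h2) h1.2
    have hlast : H.getLast hne = a := h1.1.symm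
    subst hH
    exact getLast_ne_of_cons_cons hnd hlen hlast
  · -- both endpoints
    rw [List.mem_singleton, Prod.mk.injEq] at h1 h2
    exact hab (h1.1.trans h2.1.symm)

lemma exists_cut {H : List V} (hne : H ≠ []) {u v : V} (h : (u, v) ∈ cpairs H) :
    ∃ k, H.rotate k ≠ [] ∧ (H.rotate k).head? = some v ∧ (H.rotate k).getLast? = some u := by
  rw [cpairs_eq hne] at h
  rcases List.mem_append.1 h with h | h
  · obtain ⟨s, t, heq⟩ := mem_pairs.1 h
    refine ⟨s.length + 1, ?_⟩
    have hle : s.length + 1 ≤ H.length := by rw [← heq]; simp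
    have hrot : H.rotate (s.length + 1) = (v :: t) ++ (s ++ [u]) := by
      rw [List.rotate_eq_drop_append_take hle]
      have h2 : H = (s ++ [u]) ++ v :: t := by rw [← heq]; simp
      have hlen : s.length + 1 = (s ++ [u]).length := by simp
      rw [h2, hlen, List.drop_left, List.take_left]
    rw [hrot]
    refine ⟨by simp, rfl, ?_⟩
    rw [show (v :: t) ++ (s ++ [u]) = ((v :: t) ++ s) ++ [u] by simp, List.getLast?_concat]
  · rw [List.mem_singleton, Prod.mk.injEq] at h
    refine ⟨0, ?_⟩
    rw [List.rotate_zero]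
    exact ⟨hne, h.2 ▸ List.head?_eq_head hne, h.1 ▸ List.getLast?_eq_getLast hne⟩

lemma contains_of_cycadj {P : List V} (hne : P ≠ []) {x y u v : V}
    (hh : P.head? = some v) (hl : P.getLast? = some u)
    (hadj : ContainsEdge (P ++ P.take 1) x y) (hsne : s(u, v) ≠ s(x, y)) :
    ContainsEdge P x y := by
  have hhead : P.head hne = v := by
    rw [List.head?_eq_head hne] at hh; exact Option.some.inj hh
  have hlast : P.getLast hne = u := by
    rw [List.getLast?_eq_getLast hne] at hl; exact Option.some.inj hl
  have h1 : (x, y) ∈ cpairs P ∨ (y, x) ∈ cpairs P := by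
    rcases hadj with h | h
    · exact Or.inl (mem_pairs.2 h)
    · exact Or.inr (mem_pairs.2 h)
  rw [cpairs_eq hne, hhead, hlast] at h1
  rcases h1 with h1 | h1 <;> rcases List.mem_append.1 h1 with h2 | h2
  · exact Or.inl (mem_pairs.1 h2)
  · rw [List.mem_singleton, Prod.mk.injEq] at h2
    exact absurd (by rw [h2.1, h2.2]) hsne
  · exact Or.inr (mem_pairs.1 h2)
  · rw [List.mem_singleton, Prod.mk.injEq] at h2
    exact absurd (by rw [h2.1, h2.2, Sym2.eq_swap]) hsne

end Layer3

section Layer4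
variable {V : Type*}

lemma ne_nil_of_head? {l : List V} {a : V} (h : l.head? = some a) : l ≠ [] := by
  intro he; rw [he] at h; simp at h

lemma head_ne_getLast {l : List V} (hne : l ≠ []) (hnd : l.Nodup) (hlen : 2 ≤ l.length) :
    l.head hne ≠ l.getLast hne := by
  match l with
  | [a] => simp at hlen
  | a :: b :: t =>
    intro hcon
    have h2 : (a :: b :: t).getLast (by simp) = (b :: t).getLast (List.cons_ne_nil _ _) :=
      List.getLast_cons _
    have : a ∈ b :: t := by
      rw [show a = (b :: t).getLast (List.cons_ne_nil _ _) from hcon.trans h2]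
      exact List.getLast_mem _
    exact (List.nodup_cons.1 hnd).1 this

lemma ne_of_mem_cpairs {H : List V} {p q : V} (hnd : H.Nodup) (hlen : 2 ≤ H.length)
    (h : (p, q) ∈ cpairs H) : p ≠ q := by
  have hne : H ≠ [] := by intro he; rw [he] at hlen; simp at hlen
  rw [cpairs_eq hne] at h
  rcases List.mem_append.1 h with h | h
  · have hsub : [p, q].Sublist H := (mem_pairs.1 h).sublist
    have : [p, q].Nodup := hsub.nodup hnd
    simp at this; exact this
  · rw [List.mem_singleton, Prod.mk.injEq] at h
    rw [h.1, h.2]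
    exact (head_ne_getLast hne hnd hlen).symm

lemma map_fst_pairs : ∀ l : List V, (pairs l).map Prod.fst = l.dropLast
  | [] => rfl
  | [a] => rfl
  | a :: b :: t => by
    rw [pairs_cons_cons, List.map_cons, map_fst_pairs (b :: t)]
    rfl

lemma cpairs_nodup {H : List V} (hnd : H.Nodup) : (cpairs H).Nodup := by
  rcases eq_or_ne H [] with rfl | hne
  · exact List.nodup_nil
  · apply List.Nodup.of_map Prod.fst
    have : (cpairs H).map Prod.fst = H := by
      rw [cpairs_eq hne, List.map_append, map_fst_pairs]
      simp [List.dropLast_append_getLast hne]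
    rw [this]; exact hnd

lemma key (d : V → V → ℝ)
    (OP : V → V → List V)
    (hOP : ∀ u v : V, u ≠ v → IsHamPath (OP u v) u v)
    (hOPmin : ∀ u v : V, u ≠ v → ∀ Q : List V, IsHamPath Q u v →
      pathLen d (OP u v) ≤ pathLen d Q)
    (hOPuniq : ∀ u v : V, u ≠ v → ∀ Q : List V, IsHamPath Q u v →
      pathLen d Q = pathLen d (OP u v) → Q = OP u v)
    (H : List V) (hH : IsHamCycle H)
    (hHmin : ∀ C : List V, IsHamCycle C → cycLen d H ≤ cycLen d C)
    {u v : V} (hne : u ≠ v) (huv : (u, v) ∈ cpairs H) :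
    ∃ k, OP v u = H.rotate k := by
  have hne0 : H ≠ [] := by
    intro h; rw [h] at huv; simp [cpairs, pairs] at huv
  obtain ⟨k, hPne, hPh, hPl⟩ := exists_cut hne0 huv
  set P := H.rotate k with hPdef
  have hPham : IsHamPath P v u :=
    ⟨List.nodup_rotate.2 hH.1, fun z => List.mem_rotate.2 (hH.2 z), hPh, hPl⟩
  have hcycP : cycLen d P = pathLen d P + d u v := by
    have hh : P.head hPne = v := by
      rw [List.head?_eq_head hPne] at hPh; exact Option.some.inj hPh
    have hl : P.getLast hPne = u := by
      rw [List.getLast?_eq_getLast hPne] at hPl; exact Option.some.inj hPl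
    rw [cycLen_eq d hPne, hh, hl]
  have hQbound : ∀ Q : List V, IsHamPath Q v u → cycLen d H ≤ pathLen d Q + d u v := by
    intro Q hQ
    have hQne : Q ≠ [] := ne_nil_of_head? hQ.2.2.1
    have hh : Q.head hQne = v := by
      have := hQ.2.2.1; rw [List.head?_eq_head hQne] at this; exact Option.some.inj this
    have hl : Q.getLast hQne = u := by
      have := hQ.2.2.2; rw [List.getLast?_eq_getLast hQne] at this
      exact Option.some.inj this
    have hcq : cycLen d Q = pathLen d Q + d u v := by rw [cycLen_eq d hQne, hh, hl]
    rw [← hcq]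
    exact hHmin Q ⟨hQ.1, hQ.2.1⟩
  have h1 : pathLen d P ≤ pathLen d (OP v u) := by
    have ha := hQbound (OP v u) (hOP v u hne.symm)
    have hb : cycLen d H = pathLen d P + d u v := by
      rw [← hcycP, hPdef, cycLen_rotate]
    linarith
  have h2 := hOPmin v u hne.symm P hPham
  exact ⟨k, (hOPuniq v u hne.symm P hPham (le_antisymm h1 h2)).symm⟩

lemma containsEdge_reverse {P : List V} {x y : V} (h : ContainsEdge P x y) :
    ContainsEdge P.reverse x y := by
  rcases h with h | h
  · exact Or.inr (by
      rw [show [y, x] = [x, y].reverse from rfl]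
      exact List.reverse_infix.2 h)
  · exact Or.inl (by
      rw [show [x, y] = [y, x].reverse from rfl]
      exact List.reverse_infix.2 h)

end Layer4

end Stmt7Aux

/-- Every OHC edge `e = {x, y}` has frequency at least `i - 1`:
for each OHC edge `{u, v}` other than `e`, the Hamiltonian path obtained from
the OHC by deleting `{u, v}` is the optimal path `OP u v`, and it contains `e`. -/
theorem stmt7 {V : Type*} [Fintype V] [DecidableEq V] (i : ℕ) (hi : 4 ≤ i)
    (hcard : Fintype.card V = i)
    (d : V → V → ℝ) (hdsymm : ∀ u v : V, d u v = d v u)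
    (hdpos : ∀ u v : V, u ≠ v → 0 < d u v)
    (OP : V → V → List V)
    (hOP : ∀ u v : V, u ≠ v → IsHamPath (OP u v) u v)
    (hOPmin : ∀ u v : V, u ≠ v → ∀ Q : List V, IsHamPath Q u v →
      pathLen d (OP u v) ≤ pathLen d Q)
    (hOPuniq : ∀ u v : V, u ≠ v → ∀ Q : List V, IsHamPath Q u v →
      pathLen d Q = pathLen d (OP u v) → Q = OP u v)
    (hOPsymm : ∀ u v : V, OP v u = (OP u v).reverse)
    (H : List V) (hH : IsHamCycle H)
    (hHmin : ∀ C : List V, IsHamCycle C → cycLen d H ≤ cycLen d C)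
    (hHuniq : ∀ C : List V, IsHamCycle C → cycLen d C = cycLen d H →
      ∃ k : ℕ, C = H.rotate k ∨ C = H.reverse.rotate k) :
    ∀ x y : V, x ≠ y → CycAdj H x y →
      (∀ u v : V, u ≠ v → CycAdj H u v → s(u, v) ≠ s(x, y) →
        (∃ k : ℕ, OP u v = H.rotate k ∨ OP u v = H.reverse.rotate k) ∧
        ContainsEdge (OP u v) x y) ∧
      i - 1 ≤ freq OP s(x, y) := by
  intro x y hxy hadjxy
  obtain ⟨hHnd, hHmem⟩ := hH
  have hne0 : H ≠ [] := by
    intro h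
    have := hHmem x; rw [h] at this; simp at this
  have hnlen : H.length = i := by
    have huniv : H.toFinset = Finset.univ :=
      Finset.eq_univ_iff_forall.2 fun z => List.mem_toFinset.2 (hHmem z)
    have h2 := List.toFinset_card_of_nodup hHnd
    rw [huniv, Finset.card_univ, hcard] at h2
    omega
  have hlen3 : 3 ≤ H.length := by omega
  have hadjxy' : (x, y) ∈ Stmt7Aux.cpairs H ∨ (y, x) ∈ Stmt7Aux.cpairs H := by
    have h' : [x, y] <:+: (H ++ H.take 1) ∨ [y, x] <:+: (H ++ H.take 1) := hadjxy
    rcases h' with h | h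
    · exact Or.inl (Stmt7Aux.mem_pairs.2 h)
    · exact Or.inr (Stmt7Aux.mem_pairs.2 h)
  have main2 : ∀ a b : V, a ≠ b → (a, b) ∈ Stmt7Aux.cpairs H → s(a, b) ≠ s(x, y) →
      (∃ k, OP b a = H.rotate k) ∧ ContainsEdge (OP b a) x y := by
    intro a b hab hmem hsab
    obtain ⟨k, hk⟩ := Stmt7Aux.key d OP hOP hOPmin hOPuniq H ⟨hHnd, hHmem⟩ hHmin hab hmem
    refine ⟨⟨k, hk⟩, ?_⟩
    have hOPne : OP b a ≠ [] := Stmt7Aux.ne_nil_of_head? (hOP b a hab.symm).2.2.1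
    apply Stmt7Aux.contains_of_cycadj hOPne (hOP b a hab.symm).2.2.1
      (hOP b a hab.symm).2.2.2 _ hsab
    have hcyc : (x, y) ∈ Stmt7Aux.cpairs (OP b a) ∨ (y, x) ∈ Stmt7Aux.cpairs (OP b a) := by
      rw [hk]
      rcases hadjxy' with h | h
      · exact Or.inl (Stmt7Aux.mem_cpairs_rotate k h)
      · exact Or.inr (Stmt7Aux.mem_cpairs_rotate k h)
    rcases hcyc with h | h
    · exact Or.inl (Stmt7Aux.mem_pairs.1 h)
    · exact Or.inr (Stmt7Aux.mem_pairs.1 h)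
  have mainpart : ∀ u v : V, u ≠ v → CycAdj H u v → s(u, v) ≠ s(x, y) →
      (∃ k : ℕ, OP u v = H.rotate k ∨ OP u v = H.reverse.rotate k) ∧
      ContainsEdge (OP u v) x y := by
    intro u v huvne hadj hsne
    have hadj' : (u, v) ∈ Stmt7Aux.cpairs H ∨ (v, u) ∈ Stmt7Aux.cpairs H := by
      have h' : [u, v] <:+: (H ++ H.take 1) ∨ [v, u] <:+: (H ++ H.take 1) := hadj
      rcases h' with h | h
      · exact Or.inl (Stmt7Aux.mem_pairs.2 h)
      · exact Or.inr (Stmt7Aux.mem_pairs.2 h)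
    rcases hadj' with hmem | hmem
    · obtain ⟨⟨k, hk⟩, hcont⟩ := main2 u v huvne hmem hsne
      have hrev : OP u v = (OP v u).reverse := by
        rw [hOPsymm u v, List.reverse_reverse]
      refine ⟨⟨H.length - k % H.length, Or.inr ?_⟩, ?_⟩
      · rw [hrev, hk, List.reverse_rotate]
      · rw [hrev]; exact Stmt7Aux.containsEdge_reverse hcont
    · have hsne2 : s(v, u) ≠ s(x, y) := by rw [Sym2.eq_swap]; exact hsne
      obtain ⟨⟨k, hk⟩, hcont⟩ := main2 v u huvne.symm hmem hsne2
      exact ⟨⟨k, Or.inl hk⟩, hcont⟩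
  refine ⟨mainpart, ?_⟩
  classical
  set EL : List (Sym2 V) := (Stmt7Aux.cpairs H).map (fun p => s(p.1, p.2)) with hEL
  have hELnd : EL.Nodup := by
    apply List.Nodup.map_on _ (Stmt7Aux.cpairs_nodup hHnd)
    intro p hp q hq hpq
    rcases Sym2.eq_iff.1 hpq with ⟨h1, h2⟩ | ⟨h1, h2⟩
    · exact Prod.ext h1 h2
    · rcases eq_or_ne p.1 p.2 with he | he
      · exact Prod.ext (he.trans h2) (he.symm.trans h1)
      · exfalso
        have hp' : (p.1, p.2) ∈ Stmt7Aux.cpairs H := Prod.mk.eta.symm ▸ hp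
        have hq' : (p.2, p.1) ∈ Stmt7Aux.cpairs H := by
          have : q = (p.2, p.1) := Prod.ext h2.symm h1.symm
          exact this ▸ hq
        exact Stmt7Aux.not_both hHnd hlen3 he hp' hq'
  have hELlen : EL.length = i := by
    have hp1 : (Stmt7Aux.pairs H).length = H.length - 1 := by
      simp [Stmt7Aux.pairs]
    rw [hEL, List.length_map, Stmt7Aux.cpairs_eq hne0, List.length_append, hp1]
    simp
    omega
  have hxyEL : s(x, y) ∈ EL := by
    rcases hadjxy' with h | h
    · exact List.mem_map.2 ⟨(x, y), h, rfl⟩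
    · exact List.mem_map.2 ⟨(y, x), h, Sym2.eq_swap⟩
  set T : Finset (Sym2 V) := EL.toFinset.erase s(x, y) with hT
  have hTcard : T.card = i - 1 := by
    rw [hT, Finset.card_erase_of_mem (List.mem_toFinset.2 hxyEL),
      List.toFinset_card_of_nodup hELnd, hELlen]
  have hsub : ↑T ⊆ {p : Sym2 V | ¬ p.IsDiag ∧ ∃ u v : V, p = s(u, v) ∧
      ∃ a b : V, s(x, y) = s(a, b) ∧ ContainsEdge (OP u v) a b} := by
    intro e he
    have he' : e ∈ T := Finset.mem_coe.1 he
    have hene : e ≠ s(x, y) := (Finset.mem_erase.1 he').1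
    have heEL : e ∈ EL := List.mem_toFinset.1 (Finset.mem_erase.1 he').2
    obtain ⟨p, hp, hpe⟩ := List.mem_map.1 heEL
    have hp' : (p.1, p.2) ∈ Stmt7Aux.cpairs H := Prod.mk.eta.symm ▸ hp
    have hpne : p.1 ≠ p.2 := Stmt7Aux.ne_of_mem_cpairs hHnd (by omega) hp'
    have hadjp : CycAdj H p.1 p.2 := by
      have hm : (p.1, p.2) ∈ Stmt7Aux.pairs (H ++ H.take 1) := hp'
      exact Or.inl (Stmt7Aux.mem_pairs.1 hm)
    have hsnep : s(p.1, p.2) ≠ s(x, y) := by rw [hpe]; exact hene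
    obtain ⟨_, hcont⟩ := mainpart p.1 p.2 hpne hadjp hsnep
    refine ⟨?_, p.1, p.2, hpe.symm, x, y, rfl, hcont⟩
    rw [← hpe]
    simpa [Sym2.mk_isDiag_iff] using hpne
  have hcount : T.card ≤ freq OP s(x, y) := by
    rw [freq]
    have h1 : Nat.card {p : Sym2 V // ¬ p.IsDiag ∧ ∃ u v : V, p = s(u, v) ∧
        ∃ a b : V, s(x, y) = s(a, b) ∧ ContainsEdge (OP u v) a b} =
        Set.ncard {p : Sym2 V | ¬ p.IsDiag ∧ ∃ u v : V, p = s(u, v) ∧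
        ∃ a b : V, s(x, y) = s(a, b) ∧ ContainsEdge (OP u v) a b} :=
      Nat.card_coe_set_eq _
    rw [h1]
    calc T.card = (↑T : Set (Sym2 V)).ncard := (Set.ncard_coe_finset T).symm
      _ ≤ _ := Set.ncard_le_ncard hsub (Set.toFinite _)
  omega
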